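/- Let K be an infinite field, let k, ℓ, n be positive integers with n ≥ 6k and ℓ ≥ 2, and let P_1, ..., P_ℓ be n×n matrices over K, each of rank exactly k. Then there exist matrices Q_1 similar to P_1, ..., Q_ℓ similar to P_ℓ such that k < rk(Q_1 + ... + Q_ℓ) ≤ 3k, and moreover rk(Q_1 + ... + Q_ℓ, I_n) = rk(Q_1 + ... + Q_ℓ). -/

import Mathlib

open scoped ENat

/-- Two square matrices are similar if they are conjugate by an invertible matrix. -/
def MatSimilar {K : Type*} [Field K] {n : ℕ} (P Q : Matrix (Fin n) (Fin n) K) : Prop :=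
  ∃ A : (Matrix (Fin n) (Fin n) K)ˣ,
    Q = (A : Matrix (Fin n) (Fin n) K) * P * ((A⁻¹ : (Matrix (Fin n) (Fin n) K)ˣ) : Matrix (Fin n) (Fin n) K)

/-- The rank of the pair `(P, Q)`: infimum over `(μ₁ : μ₂) ∈ ℙ¹` of `rk(μ₁P + μ₂Q)`. -/
noncomputable def pairRank {K : Type*} [Field K] {n : ℕ}
    (P Q : Matrix (Fin n) (Fin n) K) : ℕ∞ :=
  ⨅ μ : {μ : K × K // μ ≠ 0}, ((μ.1.1 • P + μ.1.2 • Q).rank : ℕ∞)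

section Helpers
variable {K : Type*} [Field K] {n : ℕ}

open Matrix Module Submodule

/-- The submodule of vectors supported on a predicate `p`. -/
def suppSubmodule (K : Type*) [Field K] {n : ℕ} (p : Fin n → Prop) :
    Submodule K (Fin n → K) where
  carrier := {x | ∀ i, ¬ p i → x i = 0}
  add_mem' := by intro a b ha hb i hi; simp [ha i hi, hb i hi]
  zero_mem' := by intro i hi; rfl
  smul_mem' := by intro c x hx i hi; simp [hx i hi]

lemma range_le_supp {M : Matrix (Fin n) (Fin n) K} {p : Fin n → Prop}
    (h : ∀ i j, ¬ p i → M i j = 0) :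
    LinearMap.range M.mulVecLin ≤ suppSubmodule K p := by
  rintro x ⟨v, rfl⟩ i hi
  show (M *ᵥ v) i = 0
  simp only [Matrix.mulVec, dotProduct]
  exact Finset.sum_eq_zero fun j _ => by rw [h i j hi, zero_mul]

lemma matrix_rank_add_le (A B : Matrix (Fin n) (Fin n) K) :
    (A + B).rank ≤ A.rank + B.rank := by
  have h : LinearMap.range (A + B).mulVecLin ≤
      LinearMap.range A.mulVecLin ⊔ LinearMap.range B.mulVecLin := by
    rintro x ⟨v, rfl⟩
    have : (A + B).mulVecLin v = A.mulVecLin v + B.mulVecLin v := by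
      rw [Matrix.mulVecLin_add]; rfl
    rw [this]
    exact Submodule.add_mem_sup ⟨v, rfl⟩ ⟨v, rfl⟩
  have h2 := Submodule.finrank_mono h
  have h3 := Submodule.finrank_sup_add_finrank_inf_eq
    (LinearMap.range A.mulVecLin) (LinearMap.range B.mulVecLin)
  show finrank K (LinearMap.range (A + B).mulVecLin) ≤
    finrank K (LinearMap.range A.mulVecLin) + finrank K (LinearMap.range B.mulVecLin)
  omega

lemma rank_le_of_row_supp (M : Matrix (Fin n) (Fin n) K) (o m : ℕ) (hom : o + m ≤ n)
    (h : ∀ i j, ¬ (o ≤ i.1 ∧ i.1 < o + m) → M i j = 0) : M.rank ≤ m := by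
  classical
  set E : Matrix (Fin n) (Fin m) K := fun i a => if i.1 = o + a.1 then 1 else 0 with hE
  have hle : LinearMap.range M.mulVecLin ≤ LinearMap.range E.mulVecLin := by
    rintro x ⟨v, rfl⟩
    refine ⟨fun a => (M *ᵥ v) ⟨o + a.1, by omega⟩, ?_⟩
    funext i
    show (E *ᵥ _) i = (M *ᵥ v) i
    simp only [Matrix.mulVec, dotProduct, hE, ite_mul, one_mul, zero_mul]
    by_cases hi : o ≤ i.1 ∧ i.1 < o + m
    · have hcong : ∀ a : Fin m,
          (if (i : ℕ) = o + ↑a then (M *ᵥ v) ⟨o + ↑a, by omega⟩ else 0)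
            = (if (i : ℕ) = o + ↑a then (M *ᵥ v) i else 0) := by
        intro a
        split_ifs with hcnd
        · congr 1
          refine Fin.ext ?_
          exact hcnd.symm
        · rfl
      refine Eq.trans (Finset.sum_congr rfl fun a _ => hcong a) ?_
      rw [Finset.sum_eq_single (⟨i.1 - o, by omega⟩ : Fin m)]
      · rw [if_pos (show (i : ℕ) = o + ((⟨i.1 - o, by omega⟩ : Fin m) : ℕ) from by
            show (i : ℕ) = o + (i.1 - o); omega)]
        rfl
      · intro b _ hb
        rw [if_neg]
        intro hcon
        refine hb (Fin.ext ?_)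
        show b.1 = i.1 - o
        omega
      · intro hcon; exact absurd (Finset.mem_univ _) hcon
    · rw [Finset.sum_eq_zero, eq_comm]
      · show (M *ᵥ v) i = 0
        simp only [Matrix.mulVec, dotProduct]
        exact Finset.sum_eq_zero fun j _ => by rw [h i j hi, zero_mul]
      · intro b _
        rw [if_neg]
        intro hcon
        have := b.2
        omega
  calc M.rank = finrank K (LinearMap.range M.mulVecLin) := rfl
    _ ≤ finrank K (LinearMap.range E.mulVecLin) := Submodule.finrank_mono hle
    _ = E.rank := rfl
    _ ≤ Fintype.card (Fin m) := E.rank_le_card_width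
    _ = m := Fintype.card_fin m

lemma rank_add_of_disjoint_blocks (A B : Matrix (Fin n) (Fin n) K)
    (p q : Fin n → Prop) [DecidablePred p] (hpq : ∀ i, ¬(p i ∧ q i))
    (hA : ∀ i j, ¬ p i ∨ ¬ p j → A i j = 0)
    (hB : ∀ i j, ¬ q i ∨ ¬ q j → B i j = 0) :
    A.rank + B.rank ≤ (A + B).rank := by
  classical
  have key : ∀ (C D : Matrix (Fin n) (Fin n) K) (r s : Fin n → Prop),
      (∀ i, ¬(r i ∧ s i)) → (∀ i j, ¬ r i ∨ ¬ r j → C i j = 0) →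
      (∀ i j, ¬ s i ∨ ¬ s j → D i j = 0) →
      LinearMap.range C.mulVecLin ≤ LinearMap.range (C + D).mulVecLin := by
    intro C D r s hrs hC hD
    rintro x ⟨v, rfl⟩
    classical
    refine ⟨fun j => if r j then v j else 0, ?_⟩
    have hDv : D *ᵥ (fun j => if r j then v j else 0) = 0 := by
      funext i
      simp only [Matrix.mulVec, dotProduct]
      refine Finset.sum_eq_zero fun j _ => ?_
      by_cases hj : r j
      · rw [hD i j (Or.inr fun hs => hrs j ⟨hj, hs⟩), zero_mul]
      · rw [if_neg hj, mul_zero]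
    have hCv : C *ᵥ (fun j => if r j then v j else 0) = C *ᵥ v := by
      funext i
      simp only [Matrix.mulVec, dotProduct]
      refine Finset.sum_congr rfl fun j _ => ?_
      by_cases hj : r j
      · rw [if_pos hj]
      · rw [hC i j (Or.inr hj), zero_mul, zero_mul]
    show (C + D) *ᵥ _ = C.mulVecLin v
    rw [Matrix.add_mulVec, hCv, hDv, add_zero]; rfl
  have hrA := key A B p q hpq hA hB
  have hrB := key B A q p (fun i hi => hpq i ⟨hi.2, hi.1⟩) hB hA
  rw [show B + A = A + B from add_comm B A] at hrB
  have hdis : Disjoint (LinearMap.range A.mulVecLin) (LinearMap.range B.mulVecLin) := by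
    rw [Submodule.disjoint_def]
    intro x hxA hxB
    have h1 := range_le_supp (p := p) (fun i j hi => hA i j (Or.inl hi)) hxA
    have h2 := range_le_supp (p := q) (fun i j hi => hB i j (Or.inl hi)) hxB
    funext i
    by_cases hp : p i
    · exact h2 i fun hq => hpq i ⟨hp, hq⟩
    · exact h1 i hp
  have hsup := Submodule.finrank_mono (sup_le hrA hrB)
  have h3 := Submodule.finrank_sup_add_finrank_inf_eq
    (LinearMap.range A.mulVecLin) (LinearMap.range B.mulVecLin)
  rw [hdis.eq_bot, finrank_bot, add_zero] at h3
  show finrank K (LinearMap.range A.mulVecLin) + finrank K (LinearMap.range B.mulVecLin) ≤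
    finrank K (LinearMap.range (A + B).mulVecLin)
  omega

lemma rank_conj (A : (Matrix (Fin n) (Fin n) K)ˣ) (P : Matrix (Fin n) (Fin n) K) :
    ((A : Matrix (Fin n) (Fin n) K) * P *
      ((A⁻¹ : (Matrix (Fin n) (Fin n) K)ˣ) : Matrix (Fin n) (Fin n) K)).rank = P.rank := by
  rw [Matrix.rank_mul_eq_left_of_isUnit_det _ _
    ((Matrix.isUnit_iff_isUnit_det _).mp (A⁻¹).isUnit),
    Matrix.rank_mul_eq_right_of_isUnit_det _ _
    ((Matrix.isUnit_iff_isUnit_det _).mp A.isUnit)]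

lemma repr_eq_zero_of_mem_span {ι : Type*} [Fintype ι] [DecidableEq ι]
    (B : Basis ι K (Fin n → K)) {s : Set ι} {x : Fin n → K}
    (hx : x ∈ Submodule.span K (B '' s)) {i : ι} (hi : i ∉ s) :
    B.repr x i = 0 := by
  have hle : Submodule.span K (B '' s) ≤
      LinearMap.ker ((Finsupp.lapply i).comp (B.repr : (Fin n → K) →ₗ[K] (ι →₀ K))) := by
    rw [Submodule.span_le]
    rintro y ⟨a, haS, rfl⟩
    have hne : a ≠ i := fun h => hi (h ▸ haS)
    simp [LinearMap.mem_ker, Basis.repr_self, Finsupp.single_apply, hne]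
  exact hle hx

end Helpers

section LemC
variable {K : Type*} [Field K] {n : ℕ}

open Matrix Module Submodule

/-- Index placement function: puts the `Fin k` block (image basis) at `[o, o+k)`,
the `Fin d` block (extra complement) at `[o+k, o+k+d)`, and the `Fin (n-k-d)` block
(kernel complement) at `[o+k+d, o+2k)` and outside `[o, o+2k)`. -/
def gfun (n o k d : ℕ) (h2 : o + 2 * k ≤ n) (hdk : d ≤ k) :
    ((Fin k ⊕ Fin (n - k - d)) ⊕ Fin d) → Fin n
  | Sum.inl (Sum.inl j) => ⟨o + j.1, by have := j.2; omega⟩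
  | Sum.inl (Sum.inr j) =>
      if h : j.1 < k - d then ⟨o + k + d + j.1, by omega⟩
      else if h' : j.1 - (k - d) < o then ⟨j.1 - (k - d), by omega⟩
      else ⟨j.1 - (k - d) + 2 * k, by have := j.2; omega⟩
  | Sum.inr j => ⟨o + k + j.1, by have := j.2; omega⟩

lemma gfun_inj (n o k d : ℕ) (h2 : o + 2 * k ≤ n) (hdk : d ≤ k) :
    Function.Injective (gfun n o k d h2 hdk) := by
  rintro ((⟨a, ha⟩ | ⟨a, ha⟩) | ⟨a, ha⟩) ((⟨b, hb⟩ | ⟨b, hb⟩) | ⟨b, hb⟩) heq <;>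
    simp only [gfun] at heq <;>
    (try split_ifs at heq) <;>
    (try rw [Fin.mk.injEq] at heq) <;>
    first
      | (simp only [Sum.inl.injEq, Sum.inr.injEq, Fin.mk.injEq]; omega)
      | (exfalso; omega)

lemma exists_similar_window (k : ℕ) (hk : 0 < k) (P : Matrix (Fin n) (Fin n) K)
    (hP : P.rank = k) (o : ℕ) (h2 : o + 2 * k ≤ n) :
    ∃ Q, MatSimilar P Q ∧
      (∀ i j : Fin n, (¬(o ≤ i.1 ∧ i.1 < o + k) ∨ ¬(o ≤ j.1 ∧ j.1 < o + 2 * k)) → Q i j = 0) := by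
  classical
  set f : (Fin n → K) →ₗ[K] (Fin n → K) := Matrix.toLin' P with hfdef
  set V := LinearMap.range f with hVdef
  have hV : finrank K ↥V = k := hP
  have hn' : finrank K (Fin n → K) = n := Module.finrank_fin_fun K
  have hker : finrank K ↥(LinearMap.ker f) = n - k := by
    have h1 := LinearMap.finrank_range_add_finrank_ker f
    rw [hn', ← hVdef, hV] at h1
    omega
  have hkn : k ≤ n := by
    have := V.finrank_le
    rw [hn', hV] at this; exact this
  set Vk := V ⊓ LinearMap.ker f with hVkdef
  set d := finrank K ↥Vk with hddef
  have hdk : d ≤ k := hV ▸ Submodule.finrank_mono inf_le_left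
  have hdnk : d ≤ n - k := hker ▸ Submodule.finrank_mono inf_le_right
  obtain ⟨C, hC⟩ := Submodule.exists_isCompl
    (Submodule.comap (LinearMap.ker f).subtype Vk)
  set W1 := C.map (LinearMap.ker f).subtype with hW1def
  have hW1ker : W1 ≤ LinearMap.ker f := Submodule.map_subtype_le _ _
  have hVW1 : Disjoint V W1 := by
    rw [Submodule.disjoint_def]
    intro x hxV hxW
    obtain ⟨y, hyC, rfl⟩ := hxW
    have hy : y ∈ Submodule.comap (LinearMap.ker f).subtype Vk :=
      Submodule.mem_comap.mpr (Submodule.mem_inf.mpr ⟨hxV, y.2⟩)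
    have : y = 0 := Submodule.disjoint_def.mp hC.disjoint y hy hyC
    rw [this]; rfl
  have hW1rank : finrank K ↥W1 = n - k - d := by
    have h1 : finrank K ↥(Submodule.comap (LinearMap.ker f).subtype Vk) + finrank K ↥C
        = n - k := by
      rw [← hker]
      exact Submodule.finrank_add_eq_of_isCompl hC
    have h2' : finrank K ↥(Submodule.comap (LinearMap.ker f).subtype Vk) = d :=
      LinearEquiv.finrank_eq (Submodule.comapSubtypeEquivOfLe inf_le_right)
    have h3 : finrank K ↥W1 = finrank K ↥C :=
      Submodule.finrank_map_subtype_eq (LinearMap.ker f) C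
    omega
  set X := V ⊔ W1 with hXdef
  have hXrank : finrank K ↥X = k + (n - k - d) := by
    have h1 := Submodule.finrank_sup_add_finrank_inf_eq V W1
    rw [hVW1.eq_bot, finrank_bot, add_zero, hV, hW1rank] at h1
    exact h1
  obtain ⟨U, hU⟩ := Submodule.exists_isCompl X
  have hUrank : finrank K ↥U = d := by
    have h1 := Submodule.finrank_add_eq_of_isCompl hU
    rw [hn', hXrank] at h1
    omega
  -- bases
  let bV : Basis (Fin k) K ↥V := Module.finBasisOfFinrankEq K ↥V hV
  let bW : Basis (Fin (n - k - d)) K ↥W1 := Module.finBasisOfFinrankEq K ↥W1 hW1rank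
  let bU : Basis (Fin d) K ↥U := Module.finBasisOfFinrankEq K ↥U hUrank
  let vV : Fin k → (Fin n → K) := fun j => (bV j : Fin n → K)
  let vW : Fin (n - k - d) → (Fin n → K) := fun j => (bW j : Fin n → K)
  let vU : Fin d → (Fin n → K) := fun j => (bU j : Fin n → K)
  have hspanV : Submodule.span K (Set.range vV) = V := by
    have : Set.range vV = V.subtype '' Set.range bV := by
      rw [← Set.range_comp]; rfl
    rw [this, Submodule.span_image, bV.span_eq, Submodule.map_top, Submodule.range_subtype]
  have hspanW : Submodule.span K (Set.range vW) = W1 := by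
    have : Set.range vW = W1.subtype '' Set.range bW := by
      rw [← Set.range_comp]; rfl
    rw [this, Submodule.span_image, bW.span_eq, Submodule.map_top, Submodule.range_subtype]
  have hspanU : Submodule.span K (Set.range vU) = U := by
    have : Set.range vU = U.subtype '' Set.range bU := by
      rw [← Set.range_comp]; rfl
    rw [this, Submodule.span_image, bU.span_eq, Submodule.map_top, Submodule.range_subtype]
  have hliV : LinearIndependent K vV := bV.linearIndependent.map' V.subtype (Submodule.ker_subtype V)
  have hliW : LinearIndependent K vW := bW.linearIndependent.map' W1.subtype (Submodule.ker_subtype W1)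
  have hliU : LinearIndependent K vU := bU.linearIndependent.map' U.subtype (Submodule.ker_subtype U)
  have hli1 : LinearIndependent K (Sum.elim vV vW) := by
    refine hliV.sum_type hliW ?_
    rw [hspanV, hspanW]; exact hVW1
  have hspan1 : Submodule.span K (Set.range (Sum.elim vV vW)) = X := by
    rw [Set.Sum.elim_range, Submodule.span_union, hspanV, hspanW]
  let u : ((Fin k ⊕ Fin (n - k - d)) ⊕ Fin d) → (Fin n → K) := Sum.elim (Sum.elim vV vW) vU
  have hli : LinearIndependent K u := by
    refine hli1.sum_type hliU ?_
    rw [hspan1, hspanU]; exact hU.disjoint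
  haveI : Nonempty ((Fin k ⊕ Fin (n - k - d)) ⊕ Fin d) := ⟨Sum.inl (Sum.inl ⟨0, hk⟩)⟩
  have hcard : Fintype.card ((Fin k ⊕ Fin (n - k - d)) ⊕ Fin d) = finrank K (Fin n → K) := by
    simp only [Fintype.card_sum, Fintype.card_fin, hn']
    omega
  let B0 : Basis ((Fin k ⊕ Fin (n - k - d)) ⊕ Fin d) K (Fin n → K) :=
    basisOfLinearIndependentOfCardEqFinrank hli hcard
  have hB0 : ⇑B0 = u := coe_basisOfLinearIndependentOfCardEqFinrank hli hcard
  -- the index equiv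
  let g := gfun n o k d h2 hdk
  have hgbij : Function.Bijective g := by
    rw [Fintype.bijective_iff_injective_and_card]
    refine ⟨gfun_inj n o k d h2 hdk, ?_⟩
    simp only [Fintype.card_sum, Fintype.card_fin]
    omega
  let τ : ((Fin k ⊕ Fin (n - k - d)) ⊕ Fin d) ≃ Fin n := Equiv.ofBijective g hgbij
  let B : Basis (Fin n) K (Fin n → K) := B0.reindex τ
  -- key facts
  have hτapp : ∀ x, τ x = g x := fun x => rfl
  have hBτ : ∀ x, B (τ x) = u x := by
    intro x
    rw [Basis.reindex_apply, Equiv.symm_apply_apply, hB0]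
  have hBker : ∀ j : Fin n, ¬(o ≤ j.1 ∧ j.1 < o + 2 * k) → B j ∈ LinearMap.ker f := by
    intro j hj
    rcases hsx : τ.symm j with ((a | a) | a)
    · exfalso
      have hj2 : j = g (Sum.inl (Sum.inl a)) := by
        rw [← τ.apply_symm_apply j, hsx]; rfl
      have hval : j.1 = o + a.1 := congrArg Fin.val hj2
      have := a.2
      omega
    · have hBj : B j = vW a := by
        rw [Basis.reindex_apply, hsx, hB0]; rfl
      rw [hBj]
      exact hW1ker (bW a).2
    · exfalso
      have hj2 : j = g (Sum.inr a) := by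
        rw [← τ.apply_symm_apply j, hsx]; rfl
      have hval : j.1 = o + k + a.1 := congrArg Fin.val hj2
      have := a.2
      omega
  have hVle : V ≤ Submodule.span K (B '' {i : Fin n | o ≤ i.1 ∧ i.1 < o + k}) := by
    rw [← hspanV, Submodule.span_le]
    rintro _ ⟨a, rfl⟩
    refine Submodule.subset_span ⟨τ (Sum.inl (Sum.inl a)), ?_, ?_⟩
    · have : (τ (Sum.inl (Sum.inl a))).1 = o + a.1 := rfl
      constructor <;> (rw [this]) <;> (have := a.2; omega)
    · exact hBτ (Sum.inl (Sum.inl a))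
  -- build Q
  let e : (Fin n → K) ≃ₗ[K] (Fin n → K) := B.equivFun
  let Q : Matrix (Fin n) (Fin n) K :=
    LinearMap.toMatrix' ((e : (Fin n → K) →ₗ[K] (Fin n → K)) ∘ₗ f ∘ₗ
      (e.symm : (Fin n → K) →ₗ[K] (Fin n → K)))
  have hcomp1 : ((e : (Fin n → K) →ₗ[K] (Fin n → K)) ∘ₗ
      (e.symm : (Fin n → K) →ₗ[K] (Fin n → K))) = LinearMap.id := by
    ext x; simp
  have hcomp2 : ((e.symm : (Fin n → K) →ₗ[K] (Fin n → K)) ∘ₗ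
      (e : (Fin n → K) →ₗ[K] (Fin n → K))) = LinearMap.id := by
    ext x; simp
  let A : (Matrix (Fin n) (Fin n) K)ˣ :=
    ⟨LinearMap.toMatrix' (e : (Fin n → K) →ₗ[K] (Fin n → K)),
     LinearMap.toMatrix' (e.symm : (Fin n → K) →ₗ[K] (Fin n → K)),
     by rw [← LinearMap.toMatrix'_comp, hcomp1, LinearMap.toMatrix'_id],
     by rw [← LinearMap.toMatrix'_comp, hcomp2, LinearMap.toMatrix'_id]⟩
  refine ⟨Q, ⟨A, ?_⟩, ?_⟩
  · have hAinv : ((A⁻¹ : (Matrix (Fin n) (Fin n) K)ˣ) : Matrix (Fin n) (Fin n) K)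
        = LinearMap.toMatrix' (e.symm : (Fin n → K) →ₗ[K] (Fin n → K)) := rfl
    have hP' : P = LinearMap.toMatrix' f := by
      rw [hfdef, LinearMap.toMatrix'_toLin']
    show Q = _
    rw [hAinv, hP']
    show LinearMap.toMatrix' _ = _
    rw [← LinearMap.toMatrix'_comp, ← LinearMap.toMatrix'_comp]
    rfl
  · intro i j hij
    have hQapp : Q i j = (e (f (e.symm fun j' => if j' = j then 1 else 0))) i := by
      rw [show Q = LinearMap.toMatrix' _ from rfl, LinearMap.toMatrix'_apply]
      rw [show (Pi.single j (1 : K) : Fin n → K) = fun j' => if j' = j then 1 else 0 from by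
        ext j'; simp [Pi.single_apply]]
      rfl
    have hsymm : e.symm (fun j' => if j' = j then (1 : K) else 0) = B j := by
      show B.equivFun.symm _ = B j
      rw [Basis.equivFun_symm_apply]
      simp [ite_smul]
    rcases hij with hrow | hcol
    · -- row outside: use repr vanishing
      have hmem : f (e.symm fun j' => if j' = j then (1 : K) else 0) ∈ V :=
        LinearMap.mem_range_self f _
      have : (e (f (e.symm fun j' => if j' = j then (1 : K) else 0))) i
          = B.repr (f (e.symm fun j' => if j' = j then (1 : K) else 0)) i := by
        rw [show e = B.equivFun from rfl, Basis.equivFun_apply]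
      rw [hQapp, this]
      exact repr_eq_zero_of_mem_span B (hVle hmem) hrow
    · -- column outside: vector in kernel
      have hker0 : f (B j) = 0 := LinearMap.mem_ker.mp (hBker j hcol)
      rw [hQapp, hsymm, hker0, map_zero]
      rfl

end LemC

section Main
open Matrix Module Submodule

theorem exists_similar_sum_rank_between {K : Type*} [Field K] [Infinite K]
    (k l n : ℕ) (hk : 0 < k) (hl : 2 ≤ l) (hn : 6 * k ≤ n)
    (P : Fin l → Matrix (Fin n) (Fin n) K) (hrk : ∀ i, (P i).rank = k) :
    ∃ Q : Fin l → Matrix (Fin n) (Fin n) K,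
      (∀ i, MatSimilar (P i) (Q i)) ∧
      k < (∑ i, Q i).rank ∧ (∑ i, Q i).rank ≤ 3 * k ∧
      pairRank (∑ i, Q i) 1 = (((∑ i, Q i).rank : ℕ) : ℕ∞) := by
  classical
  have hln : 0 < l := by omega
  let i0 : Fin l := ⟨0, by omega⟩
  let i1 : Fin l := ⟨1, by omega⟩
  have h01 : i0 ≠ i1 := by simp [i0, i1]
  let off : Fin l → ℕ := fun i => if i = i0 then 0 else if i = i1 then 2 * k else 4 * k
  have hwin : ∀ i, off i + 2 * k ≤ n := by
    intro i; simp only [off]; split_ifs <;> omega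
  choose Q hsim hsupp using fun i => exists_similar_window k hk (P i) (hrk i) (off i) (hwin i)
  have hQrank : ∀ i, (Q i).rank = k := by
    intro i
    obtain ⟨A, hA⟩ := hsim i
    rw [hA, rank_conj, hrk i]
  have hoff0 : off i0 = 0 := by simp [off]
  have hoff1 : off i1 = 2 * k := by simp [off, Ne.symm h01]
  have hoffr : ∀ i, i ≠ i0 → i ≠ i1 → off i = 4 * k := by
    intro i hi0 hi1; simp [off, hi0, hi1]
  set R : Matrix (Fin n) (Fin n) K := ∑ i ∈ (Finset.univ.erase i0).erase i1, Q i with hRdef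
  have h1mem : i1 ∈ Finset.univ.erase i0 :=
    Finset.mem_erase.mpr ⟨Ne.symm h01, Finset.mem_univ _⟩
  have hsplit : ∑ i, Q i = Q i0 + Q i1 + R := by
    rw [← Finset.add_sum_erase _ Q (Finset.mem_univ i0),
        ← Finset.add_sum_erase _ Q h1mem, ← add_assoc]
  -- support facts
  have hQ0blk : ∀ i j : Fin n, (¬(i.1 < 2 * k) ∨ ¬(j.1 < 2 * k)) → Q i0 i j = 0 := by
    intro i j h
    refine hsupp i0 i j ?_
    rcases h with h | h
    · exact Or.inl (by omega)
    · exact Or.inr (by omega)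
  have hQ1blk : ∀ i j : Fin n,
      (¬(2 * k ≤ i.1 ∧ i.1 < 4 * k) ∨ ¬(2 * k ≤ j.1 ∧ j.1 < 4 * k)) → Q i1 i j = 0 := by
    intro i j h
    refine hsupp i1 i j ?_
    rcases h with h | h
    · exact Or.inl (by omega)
    · exact Or.inr (by omega)
  have hS01blk : ∀ i j : Fin n, (¬(i.1 < 4 * k) ∨ ¬(j.1 < 4 * k)) → (Q i0 + Q i1) i j = 0 := by
    intro i j h
    have h0 : Q i0 i j = 0 := by
      refine hQ0blk i j ?_
      rcases h with h | h
      · exact Or.inl (by omega)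
      · exact Or.inr (by omega)
    have h1 : Q i1 i j = 0 := by
      refine hQ1blk i j ?_
      rcases h with h | h
      · exact Or.inl (by omega)
      · exact Or.inr (by omega)
    rw [Matrix.add_apply, h0, h1, add_zero]
  have hRsupp : ∀ i j : Fin n,
      (¬(4 * k ≤ i.1 ∧ i.1 < 4 * k + k) ∨ ¬(4 * k ≤ j.1 ∧ j.1 < 4 * k + 2 * k)) → R i j = 0 := by
    intro i j h
    rw [hRdef, Matrix.sum_apply]
    refine Finset.sum_eq_zero fun m hm => ?_
    have hm1 : m ≠ i1 := (Finset.mem_erase.mp hm).1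
    have hm0 : m ≠ i0 := (Finset.mem_erase.mp (Finset.mem_erase.mp hm).2).1
    have hoffm := hoffr m hm0 hm1
    refine hsupp m i j ?_
    rcases h with h | h
    · exact Or.inl (by omega)
    · exact Or.inr (by omega)
  have hRblk : ∀ i j : Fin n,
      (¬(4 * k ≤ i.1 ∧ i.1 < 6 * k) ∨ ¬(4 * k ≤ j.1 ∧ j.1 < 6 * k)) → R i j = 0 := by
    intro i j h
    refine hRsupp i j ?_
    rcases h with h | h
    · exact Or.inl (by omega)
    · exact Or.inr (by omega)
  -- rank bounds
  have h2k : 2 * k ≤ (Q i0 + Q i1).rank := by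
    have hblk := rank_add_of_disjoint_blocks (Q i0) (Q i1)
      (fun i => i.1 < 2 * k) (fun i => 2 * k ≤ i.1 ∧ i.1 < 4 * k)
      (fun i => by omega) hQ0blk hQ1blk
    rw [hQrank i0, hQrank i1] at hblk
    omega
  have hlow : 2 * k ≤ (∑ i, Q i).rank := by
    rw [hsplit]
    have hblk := rank_add_of_disjoint_blocks (Q i0 + Q i1) R
      (fun i => i.1 < 4 * k) (fun i => 4 * k ≤ i.1 ∧ i.1 < 6 * k)
      (fun i => by omega) hS01blk hRblk
    omega
  have hup : (∑ i, Q i).rank ≤ 3 * k := by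
    rw [hsplit]
    have t1 := matrix_rank_add_le (Q i0 + Q i1) R
    have t2 := matrix_rank_add_le (Q i0) (Q i1)
    have t3 : R.rank ≤ k := rank_le_of_row_supp R (4 * k) k (by omega)
      (fun i j h => hRsupp i j (Or.inl h))
    rw [hQrank i0, hQrank i1] at t2
    omega
  refine ⟨Q, hsim, by omega, hup, ?_⟩
  -- pairRank
  apply le_antisymm
  · have hμ : ((1 : K), (0 : K)) ≠ (0 : K × K) := by
      simp [Prod.ext_iff]
    refine iInf_le_of_le ⟨((1 : K), (0 : K)), hμ⟩ ?_
    have h0 : ((1 : K) • (∑ i, Q i) + (0 : K) • (1 : Matrix (Fin n) (Fin n) K)).rank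
        = (∑ i, Q i).rank := by simp
    show ((((1 : K) • (∑ i, Q i) + (0 : K) • (1 : Matrix (Fin n) (Fin n) K)).rank : ℕ) : ℕ∞)
      ≤ (((∑ i, Q i).rank : ℕ) : ℕ∞)
    rw [h0]
  · refine le_iInf ?_
    rintro ⟨⟨a, b⟩, hab⟩
    show (((∑ i, Q i).rank : ℕ) : ℕ∞)
      ≤ (((a • (∑ i, Q i) + b • (1 : Matrix (Fin n) (Fin n) K)).rank : ℕ) : ℕ∞)
    rw [Nat.cast_le]
    by_cases hb : b = 0
    · have ha : a ≠ 0 := by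
        intro h
        exact hab (by simp [Prod.ext_iff, h, hb])
      subst hb
      have hmul : a • (∑ i, Q i) + (0 : K) • (1 : Matrix (Fin n) (Fin n) K)
          = (a • (1 : Matrix (Fin n) (Fin n) K)) * (∑ i, Q i) := by
        rw [smul_mul_assoc, one_mul, zero_smul, add_zero]
      rw [hmul, Matrix.rank_mul_eq_right_of_isUnit_det]
      rw [Matrix.det_smul, Matrix.det_one, mul_one]
      exact isUnit_iff_ne_zero.mpr (pow_ne_zero _ ha)
    · have hdet : IsUnit ((b • (1 : Matrix (Fin n) (Fin n) K)).det) := by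
        rw [Matrix.det_smul, Matrix.det_one, mul_one]
        exact isUnit_iff_ne_zero.mpr (pow_ne_zero _ hb)
      have hrkb : (b • (1 : Matrix (Fin n) (Fin n) K)).rank = n := by
        rw [Matrix.rank_of_isUnit _ ((Matrix.isUnit_iff_isUnit_det _).mpr hdet),
          Fintype.card_fin]
      have h1 : (b • (1 : Matrix (Fin n) (Fin n) K)).rank
          ≤ (a • (∑ i, Q i) + b • (1 : Matrix (Fin n) (Fin n) K)).rank
            + (-(a • (∑ i, Q i))).rank := by
        have hadd := matrix_rank_add_le
          (a • (∑ i, Q i) + b • (1 : Matrix (Fin n) (Fin n) K)) (-(a • (∑ i, Q i)))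
        have hdecomp : (a • (∑ i, Q i) + b • (1 : Matrix (Fin n) (Fin n) K))
            + (-(a • (∑ i, Q i))) = b • (1 : Matrix (Fin n) (Fin n) K) := by
          abel
        rwa [hdecomp] at hadd
      have h2 : (-(a • (∑ i, Q i))).rank ≤ (∑ i, Q i).rank := by
        have hneg : -(a • (∑ i, Q i))
            = ((-a) • (1 : Matrix (Fin n) (Fin n) K)) * (∑ i, Q i) := by
          rw [smul_mul_assoc, one_mul, neg_smul]
        rw [hneg]
        exact Matrix.rank_mul_le_right _ _
      omega

end Main
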